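/- Let m ≥ 1 and L > 0, let f : ℝ^m → ℝ be differentiable with L-Lipschitz gradient on the nonnegative orthant ℝ^m_+, and let λ* ∈ ℝ^m_+ satisfy f(λ*) ≤ f(μ) for all μ ∈ ℝ^m_+. Then for every λ ∈ ℝ^m_+, ‖[−∇f(λ)]₊‖₂² ≤ 2L·(f(λ) − f(λ*)). -/

import Mathlib

open scoped RealInnerProductSpace
open intervalIntegral

/-- Descent lemma along a segment where the gradient is Lipschitz. -/
lemma descent_aux {E : Type*} [NormedAddCommGroup E] [InnerProductSpace ℝ E] [CompleteSpace E]
    (f : E → ℝ) (hf : Differentiable ℝ f) (x d : E) (L : ℝ) (hL : 0 ≤ L)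
    (h : ∀ s ∈ Set.Icc (0:ℝ) 1, ∀ t ∈ Set.Icc (0:ℝ) 1,
      ‖gradient f (x + s • d) - gradient f (x + t • d)‖ ≤ L * |s - t| * ‖d‖) :
    f (x + d) ≤ f x + ⟪gradient f x, d⟫ + L / 2 * ‖d‖ ^ 2 := by
  set φ : ℝ → ℝ := fun t => ⟪gradient f (x + t • d), d⟫ with hφ
  have hder : ∀ t : ℝ, HasDerivAt (fun t => f (x + t • d)) (φ t) t := by
    intro t
    have h1 : HasDerivAt (fun t : ℝ => x + t • d) d t := by
      simpa using ((hasDerivAt_id t).smul_const d).const_add x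
    have h2 := (hf (x + t • d)).hasGradientAt
    have := h2.hasFDerivAt.comp_hasDerivAt t h1
    rw [InnerProductSpace.toDual_apply_apply] at this; exact this
  -- φ is Lipschitz on [0,1], hence continuous on [0,1]
  have hφlip : LipschitzOnWith (Real.toNNReal (L * ‖d‖ * ‖d‖)) φ (Set.Icc 0 1) := by
    rw [lipschitzOnWith_iff_dist_le_mul]
    intro s hs t ht
    have hb := h s hs t ht
    have : |φ s - φ t| ≤ ‖gradient f (x + s • d) - gradient f (x + t • d)‖ * ‖d‖ := by
      have : φ s - φ t = ⟪gradient f (x + s • d) - gradient f (x + t • d), d⟫ := by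
        simp [hφ, inner_sub_left]
      rw [this]
      exact abs_real_inner_le_norm _ _
    have h2 : |φ s - φ t| ≤ L * |s - t| * ‖d‖ * ‖d‖ :=
      this.trans (by nlinarith [norm_nonneg d])
    rw [Real.dist_eq, Real.dist_eq]
    have hnn : 0 ≤ L * ‖d‖ * ‖d‖ := by positivity
    rw [Real.coe_toNNReal _ hnn]
    nlinarith [abs_nonneg (s - t)]
  have hφcont : ContinuousOn φ (Set.Icc 0 1) := hφlip.continuousOn
  have hint : IntervalIntegrable φ MeasureTheory.volume 0 1 := by
    apply ContinuousOn.intervalIntegrable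
    rwa [Set.uIcc_of_le (by norm_num : (0:ℝ) ≤ 1)]
  have hftc : ∫ t in (0:ℝ)..1, φ t = f (x + d) - f x := by
    have := intervalIntegral.integral_eq_sub_of_hasDerivAt
      (f := fun t => f (x + t • d)) (f' := φ)
      (fun t _ => hder t) hint
    simpa using this
  -- bound the integral
  have hbound : ∫ t in (0:ℝ)..1, (φ t - φ 0) ≤ ∫ t in (0:ℝ)..1, L * ‖d‖ ^ 2 * t := by
    apply intervalIntegral.integral_mono_on (by norm_num)
    · exact hint.sub (intervalIntegrable_const)
    · exact (continuous_const.mul continuous_id).intervalIntegrable 0 1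
    · intro t ht
      have hb := h t ht 0 (by norm_num)
      have h0 : φ t - φ 0 = ⟪gradient f (x + t • d) - gradient f (x + (0:ℝ) • d), d⟫ := by
        simp [hφ, inner_sub_left]
      have h1 : φ t - φ 0 ≤ ‖gradient f (x + t • d) - gradient f (x + (0:ℝ) • d)‖ * ‖d‖ := by
        rw [h0]; exact real_inner_le_norm _ _
      have habs : |t - 0| = t := by
        rw [sub_zero, abs_of_nonneg ht.1]
      calc φ t - φ 0 ≤ L * |t - 0| * ‖d‖ * ‖d‖ := h1.trans (by nlinarith [norm_nonneg d])
        _ = L * ‖d‖ ^ 2 * t := by rw [habs]; ring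
  have hval : ∫ t in (0:ℝ)..1, L * ‖d‖ ^ 2 * t = L / 2 * ‖d‖ ^ 2 := by
    rw [intervalIntegral.integral_const_mul, integral_id]
    ring
  have hsplit : ∫ t in (0:ℝ)..1, (φ t - φ 0) = (f (x + d) - f x) - φ 0 := by
    rw [intervalIntegral.integral_sub hint intervalIntegrable_const, hftc,
      intervalIntegral.integral_const]
    simp
  have hφ0 : φ 0 = ⟪gradient f x, d⟫ := by simp [hφ]
  rw [hsplit, hval, hφ0] at hbound
  linarith

theorem stmt_5 (m : ℕ) (hm : 1 ≤ m) (L : ℝ) (hL : 0 < L)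
    (f : EuclideanSpace ℝ (Fin m) → ℝ) (hf : Differentiable ℝ f)
    (hlip : ∀ x : EuclideanSpace ℝ (Fin m), (∀ i, 0 ≤ x i) →
      ∀ y : EuclideanSpace ℝ (Fin m), (∀ i, 0 ≤ y i) →
      ‖gradient f x - gradient f y‖ ≤ L * ‖x - y‖)
    (lstar : EuclideanSpace ℝ (Fin m)) (hstar : ∀ i, 0 ≤ lstar i)
    (hmin : ∀ μ : EuclideanSpace ℝ (Fin m), (∀ i, 0 ≤ μ i) → f lstar ≤ f μ)
    (lam : EuclideanSpace ℝ (Fin m)) (hlam : ∀ i, 0 ≤ lam i) :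
    ∑ i, (max (-(gradient f lam i)) 0) ^ 2 ≤ 2 * L * (f lam - f lstar) := by
  set g := gradient f lam with hg
  set d : EuclideanSpace ℝ (Fin m) := WithLp.toLp 2 (fun i => max (-(g i)) 0) with hd
  set S := ∑ i, (max (-(g i)) 0) ^ 2 with hS
  have hdnn : ∀ i, (0:ℝ) ≤ d i := fun i => le_max_right _ _
  have hterm : ∀ i, g i * d i = -(d i ^ 2) := by
    intro i
    rcases le_or_gt 0 (g i) with hgi | hgi
    · have : d i = 0 := by simp [hd, max_eq_right (by linarith : -(g i) ≤ 0)]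
      simp [this]
    · have : d i = -(g i) := by simp [hd, max_eq_left (by linarith : (0:ℝ) ≤ -(g i))]
      rw [this]; ring
  have hinner : ⟪g, d⟫ = -S := by
    rw [PiLp.inner_apply]
    simp only [RCLike.inner_apply, conj_trivial]
    rw [hS, ← Finset.sum_neg_distrib]
    exact Finset.sum_congr rfl fun i _ => by
      have := hterm i; simp [hd] at this ⊢; linarith [hterm i]
  have hnormsq : ‖d‖ ^ 2 = S := by
    rw [← real_inner_self_eq_norm_sq, PiLp.inner_apply]
    simp only [RCLike.inner_apply, conj_trivial]
    exact Finset.sum_congr rfl fun i _ => by rw [sq]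
  set d' : EuclideanSpace ℝ (Fin m) := (1 / L) • d with hd'
  have hd'nn : ∀ i, (0:ℝ) ≤ d' i := by
    intro i
    have : d' i = (1 / L) * d i := rfl
    rw [this]
    positivity
  have horth : ∀ t ∈ Set.Icc (0:ℝ) 1, ∀ i, 0 ≤ (lam + t • d') i := by
    intro t ht i
    have : (lam + t • d') i = lam i + t * d' i := rfl
    rw [this]
    have := hd'nn i
    nlinarith [hlam i, ht.1]
  have hdesc := descent_aux f hf lam d' L hL.le (by
    intro s hs t ht
    have h1 := hlip (lam + s • d') (horth s hs) (lam + t • d') (horth t ht)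
    have h2 : (lam + s • d') - (lam + t • d') = (s - t) • d' := by
      module
    rw [h2, norm_smul] at h1
    rw [Real.norm_eq_abs] at h1
    linarith [h1, mul_assoc L |s - t| ‖d'‖ ▸ le_refl (L * |s - t| * ‖d'‖)])
  have hmemi : ∀ i, (0:ℝ) ≤ (lam + d') i := by
    intro i
    have := horth 1 (by norm_num) i
    simpa using this
  have hmin' : f lstar ≤ f (lam + d') := hmin _ hmemi
  have hinner' : ⟪g, d'⟫ = -(S / L) := by
    rw [hd', real_inner_smul_right, hinner]
    field_simp
  have hnorm' : ‖d'‖ ^ 2 = (1 / L) ^ 2 * S := by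
    rw [hd', norm_smul, mul_pow, ← hnormsq]
    simp [abs_of_pos (by positivity : (0:ℝ) < 1 / L)]
  rw [hinner', hnorm'] at hdesc
  have hSnn : 0 ≤ S := Finset.sum_nonneg fun i _ => sq_nonneg _
  have key : f lstar ≤ f lam + -(S / L) + L / 2 * ((1 / L) ^ 2 * S) :=
    hmin'.trans hdesc
  have hL' : L ≠ 0 := ne_of_gt hL
  have : f lstar ≤ f lam - S / (2 * L) := by
    have heq : f lam + -(S / L) + L / 2 * ((1 / L) ^ 2 * S) = f lam - S / (2 * L) := by
      field_simp
      ring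
    linarith [key, heq.symm.le, heq.le]
  calc S ≤ 2 * L * (S / (2 * L)) := by
        rw [mul_div_cancel₀ _ (by positivity : (2:ℝ) * L ≠ 0)]
      _ ≤ 2 * L * (f lam - f lstar) := by
        apply mul_le_mul_of_nonneg_left _ (by positivity)
        linarith
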